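/- Every finite simple graph with maximum degree at most Δ can be edge-partitioned into at most Δ star forests (forests in which every connected component is a star). -/

import Mathlib

open SimpleGraph

/-- A graph is a star forest if it is acyclic and contains no path on four vertices,
i.e., every connected component is a star. -/
def IsStarForest {V : Type*} (H : SimpleGraph V) : Prop :=
  H.IsAcyclic ∧ ∀ a b c d : V, H.Adj a b → H.Adj b c → H.Adj c d → a = c ∨ b = d

/-- The subgraph of `G` consisting of the edges of `G` receiving color `i` under `f`. -/
def colorClass {V : Type*} {β : Type*} (G : SimpleGraph V) (f : Sym2 V → β) (i : β) :
    SimpleGraph V :=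
  SimpleGraph.fromEdgeSet {e | e ∈ G.edgeSet ∧ f e = i}

lemma p4_acyclic {V : Type*} {H : SimpleGraph V}
    (h : ∀ a b c d : V, H.Adj a b → H.Adj b c → H.Adj c d → a = c ∨ b = d) :
    H.IsAcyclic := by
  intro u c hc
  have h3 := hc.three_le_length
  cases c with
  | nil => simp at h3
  | cons h1 p =>
    cases p with
    | nil => simp at h3
    | cons h2 p2 =>
      cases p2 with
      | nil => simp at h3
      | cons h3' q =>
        have hnd := hc.support_nodup
        simp only [SimpleGraph.Walk.support_cons, List.tail_cons, List.nodup_cons,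
          List.mem_cons] at hnd
        have hu : u ∈ q.support := q.end_mem_support
        have hd' : _ ∈ q.support := q.start_mem_support
        rcases h _ _ _ _ h1 h2 h3' with heq | heq
        · exact hnd.2.1 (heq ▸ hu)
        · exact hnd.1 (Or.inr (heq ▸ hd'))

lemma colorClass_adj {V : Type*} {β : Type*} (G : SimpleGraph V) (f : Sym2 V → β) (i : β)
    (a b : V) : (colorClass G f i).Adj a b ↔ G.Adj a b ∧ f s(a, b) = i := by
  simp only [colorClass, fromEdgeSet_adj, Set.mem_setOf_eq, mem_edgeSet]
  constructor
  · rintro ⟨⟨h1, h2⟩, _⟩; exact ⟨h1, h2⟩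
  · rintro ⟨h1, h2⟩; exact ⟨⟨h1, h2⟩, h1.ne⟩

lemma key_lemma {V : Type*} [Fintype V] (Δ : ℕ) :
    ∀ n : ℕ, ∀ G : SimpleGraph V, G.edgeSet.ncard ≤ n →
      (∀ v : V, (G.neighborSet v).ncard ≤ Δ) →
      ∃ f : Sym2 V → ℕ, (∀ e ∈ G.edgeSet, f e < Δ) ∧
        ∀ i : ℕ, ∀ a b c d : V, (colorClass G f i).Adj a b → (colorClass G f i).Adj b c →
          (colorClass G f i).Adj c d → a = c ∨ b = d := by
  classical
  intro n
  induction n with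
  | zero =>
    intro G hcard _
    have he : G.edgeSet = ∅ :=
      (Set.ncard_eq_zero (Set.toFinite _)).mp (Nat.le_zero.mp hcard)
    refine ⟨fun _ => 0, by simp [he], ?_⟩
    intro i a b c d hab _ _
    rw [colorClass_adj] at hab
    exact absurd (G.mem_edgeSet.mpr hab.1) (by simp [he])
  | succ n IH =>
    intro G hcard hdeg
    by_cases hE : G.edgeSet = ∅
    · refine ⟨fun _ => 0, by simp [hE], ?_⟩
      intro i a b c d hab _ _
      rw [colorClass_adj] at hab
      exact absurd (G.mem_edgeSet.mpr hab.1) (by simp [hE])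
    · have hex : ∃ x y : V, G.Adj x y := by
        obtain ⟨e, he⟩ := Set.nonempty_iff_ne_empty.mpr hE
        induction e using Sym2.ind with
        | _ x y => exact ⟨x, y, G.mem_edgeSet.mp he⟩
      obtain ⟨v, u₀, hvu₀⟩ := hex
      let G' : SimpleGraph V :=
        ⟨fun a b => G.Adj a b ∧ a ≠ v ∧ b ≠ v,
         ⟨fun a b h => ⟨h.1.symm, h.2.2, h.2.1⟩⟩,
         ⟨fun a h => G.loopless.irrefl a h.1⟩⟩
      have hG'adj : ∀ a b : V, G'.Adj a b ↔ (G.Adj a b ∧ a ≠ v ∧ b ≠ v) := fun _ _ => Iff.rfl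
      -- edge count drops
      have hsub : G'.edgeSet ⊆ G.edgeSet := by
        intro e he
        induction e using Sym2.ind with
        | _ x y => exact G.mem_edgeSet.mpr ((G'.mem_edgeSet.mp he).1)
      have hssub : G'.edgeSet ⊂ G.edgeSet := by
        refine ⟨hsub, fun hcon => ?_⟩
        have := (G'.mem_edgeSet.mp (hcon (G.mem_edgeSet.mpr hvu₀))).2.1
        exact this rfl
      have hcard' : G'.edgeSet.ncard ≤ n := by
        have := Set.ncard_lt_ncard hssub (Set.toFinite _)
        omega
      have hdeg' : ∀ w : V, (G'.neighborSet w).ncard ≤ Δ := by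
        intro w
        refine le_trans (Set.ncard_le_ncard ?_ (Set.toFinite _)) (hdeg w)
        intro x hx
        exact hx.1
      obtain ⟨f', hf'lt, hf'P4⟩ := IH G' hcard' hdeg'
      -- free colors at neighbors of v
      have hfree : ∀ u, G.Adj v u → ∃ c : ℕ, c < Δ ∧ ∀ w, G'.Adj u w → f' s(u, w) ≠ c := by
        intro u hu
        have hΔpos : 1 ≤ Δ := by
          have h0 : 0 < (G.neighborSet u).ncard :=
            (Set.ncard_pos (Set.toFinite _)).mpr ⟨v, hu.symm⟩
          have := hdeg u
          omega
        set used : Set ℕ := (fun w => f' s(u, w)) '' (G'.neighborSet u) with hused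
        have husedfin : used.Finite := (Set.toFinite _).image _
        have hcard_used : used.ncard < Δ := by
          have h1 : used.ncard ≤ (G'.neighborSet u).ncard :=
            Set.ncard_image_le (Set.toFinite _)
          have hsubn : G'.neighborSet u ⊆ G.neighborSet u \ {v} := by
            intro x hx
            exact ⟨hx.1, by simpa using hx.2.2⟩
          have h2 : (G'.neighborSet u).ncard ≤ (G.neighborSet u \ {v}).ncard :=
            Set.ncard_le_ncard hsubn (Set.toFinite _)
          have h3 : (G.neighborSet u \ {v}).ncard = (G.neighborSet u).ncard - 1 :=
            Set.ncard_diff_singleton_of_mem hu.symm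
          have h4 := hdeg u
          have h0 : 0 < (G.neighborSet u).ncard :=
            (Set.ncard_pos (Set.toFinite _)).mpr ⟨v, hu.symm⟩
          omega
        by_contra hcon
        push_neg at hcon
        have hsub2 : ↑(Finset.range Δ) ⊆ used := by
          intro c hc
          obtain ⟨w, hw1, hw2⟩ := hcon c (by simpa using hc)
          exact ⟨w, hw1, hw2⟩
        have := Set.ncard_le_ncard hsub2 husedfin
        rw [Set.ncard_coe_finset, Finset.card_range] at this
        omega
      choose gg hgg1 hgg2 using hfree
      let g : V → ℕ := fun u => if h : G.Adj v u then gg u h else 0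
      have hg1 : ∀ u (h : G.Adj v u), g u = gg u h := fun u h => dif_pos h
      have hcomm : ∀ a b : V, (if a = v then g b else if b = v then g a else f' s(a, b)) =
          (if b = v then g a else if a = v then g b else f' s(b, a)) := by
        intro a b
        by_cases ha : a = v <;> by_cases hb : b = v <;> simp [ha, hb, Sym2.eq_swap]
      let f : Sym2 V → ℕ :=
        Sym2.lift ⟨fun a b => if a = v then g b else if b = v then g a else f' s(a, b), hcomm⟩
      have hfmk : ∀ a b : V,
          f s(a, b) = if a = v then g b else if b = v then g a else f' s(a, b) :=
        fun a b => rfl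
      -- helper facts
      have K1 : ∀ (i : ℕ) (a b : V), (colorClass G f i).Adj a b → a ≠ v → b ≠ v →
          (colorClass G' f' i).Adj a b := by
        intro i a b hab ha hb
        rw [colorClass_adj] at hab ⊢
        rw [hfmk, if_neg ha, if_neg hb] at hab
        exact ⟨⟨hab.1, ha, hb⟩, hab.2⟩
      have K2 : ∀ (i : ℕ) (b : V), (colorClass G f i).Adj v b → G.Adj v b ∧ g b = i := by
        intro i b h
        rw [colorClass_adj, hfmk, if_pos rfl] at h
        exact h
      have K3 : ∀ (i : ℕ) (b : V), G.Adj v b → g b = i → ∀ w,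
          ¬ (colorClass G' f' i).Adj b w := by
        intro i b hb hgb w hw
        rw [colorClass_adj] at hw
        have hne := hgg2 b hb w hw.1
        rw [← hg1 b hb, hgb] at hne
        exact hne hw.2
      refine ⟨f, ?_, ?_⟩
      · intro e he
        induction e using Sym2.ind with
        | _ a b =>
          have hab : G.Adj a b := G.mem_edgeSet.mp he
          rw [hfmk]
          by_cases ha : a = v
          · subst ha
            rw [if_pos rfl, hg1 b hab]
            exact hgg1 b hab
          · by_cases hb : b = v
            · subst hb
              rw [if_neg ha, if_pos rfl, hg1 a hab.symm]
              exact hgg1 a hab.symm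
            · rw [if_neg ha, if_neg hb]
              exact hf'lt _ (G'.mem_edgeSet.mpr ⟨hab, ha, hb⟩)
      · intro i a b c d hab hbc hcd
        by_cases hb : b = v
        · rw [hb] at hbc
          have h2 := K2 i c hbc
          by_cases hd : d = v
          · exact Or.inr (hb.trans hd.symm)
          · exact absurd (K1 i c d hcd h2.1.ne' hd) (K3 i c h2.1 h2.2 d)
        · by_cases hc : c = v
          · rw [hc] at hbc
            have h2 := K2 i b hbc.symm
            by_cases ha : a = v
            · exact Or.inl (ha.trans hc.symm)
            · exact absurd (K1 i b a hab.symm hb ha) (K3 i b h2.1 h2.2 a)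
          · by_cases ha : a = v
            · rw [ha] at hab
              have h1 := K2 i b hab
              exact absurd (K1 i b c hbc hb hc) (K3 i b h1.1 h1.2 c)
            · by_cases hd : d = v
              · rw [hd] at hcd
                have h3 := K2 i c hcd.symm
                exact absurd (K1 i c b hbc.symm hc hb) (K3 i c h3.1 h3.2 b)
              · exact hf'P4 i a b c d (K1 i a b hab ha hb) (K1 i b c hbc hb hc)
                  (K1 i c d hcd hc hd)

/-- Every finite simple graph with maximum degree at most `Δ` can be edge-partitioned into
at most `Δ` star forests. -/
theorem star_arboricity_le_max_degree {V : Type*} [Fintype V] (G : SimpleGraph V)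
    [DecidableRel G.Adj] (Δ : ℕ) (hΔ : ∀ v : V, G.degree v ≤ Δ) :
    ∃ f : Sym2 V → ℕ, (∀ e ∈ G.edgeSet, f e < Δ) ∧
      ∀ i : ℕ, IsStarForest (colorClass G f i) := by
  have hdeg : ∀ v : V, (G.neighborSet v).ncard ≤ Δ := by
    intro v
    calc (G.neighborSet v).ncard = Nat.card (G.neighborSet v) := rfl
      _ = Fintype.card (G.neighborSet v) := Nat.card_eq_fintype_card
      _ = G.degree v := G.card_neighborSet_eq_degree v
      _ ≤ Δ := hΔ v
  obtain ⟨f, h1, h2⟩ := key_lemma Δ G.edgeSet.ncard G le_rfl hdeg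
  exact ⟨f, h1, fun i => ⟨p4_acyclic (h2 i), h2 i⟩⟩
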